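/- Fix an integer k ≥ 1 and, for integers j ≥ 1, set u_k(j) = (F_{k+1} + j F_{k+2})/(F_k + j F_{k+1}) and v_k(j) = (L_k + j F_{k+1})/(L_{k−1} + j F_k). Then, as real numbers: (i) (u_k(j+1) + 1)/3 > √(u_k(j)) for all integers j ≥ 1; (ii) (v_k(j) + 1)/3 > √(v_k(j+1)) for all integers j ≥ 7. (In the paper's notation, φ(u_k(j+1)) > ψ(u_k(j)) and φ(v_k(j)) > ψ(v_k(j+1)), where φ(a) = (a+1)/3 and ψ(a) = √a.) -/
import Mathlib


/-- The Lucas numbers `ℓ_k = f_{k-1} + f_{k+1}` (for `k ≥ 1`). -/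
lemma fib_expand (n c : ℕ) : Nat.fib (n + (c+2)) = Nat.fib (n + c) + Nat.fib (n + (c+1)) := by
  have := Nat.fib_add_two (n := n + c)
  rwa [show n + c + 2 = n + (c+2) by omega, show n + c + 1 = n + (c+1) by omega] at this

lemma fib_step (n : ℕ) : Nat.fib (n + 8) + Nat.fib n = 7 * Nat.fib (n + 4) := by
  have h2 := fib_expand n 0
  have h3 := fib_expand n 1
  have h4 := fib_expand n 2
  have h5 := fib_expand n 3
  have h6 := fib_expand n 4
  have h7 := fib_expand n 5
  have h8 := fib_expand n 6
  norm_num at h2 h3 h4 h5 h6 h7 h8 ⊢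
  omega

lemma fib_qrel (k : ℕ) :
    (Nat.fib (4*k+4) : ℤ)^2 + (Nat.fib (4*k) : ℤ)^2
      = 7 * (Nat.fib (4*k)) * (Nat.fib (4*k+4)) + 9 := by
  induction k with
  | zero => norm_num
  | succ m ih =>
    have hs : (Nat.fib (4*m+8) : ℤ) + Nat.fib (4*m) = 7 * Nat.fib (4*m+4) := by
      exact_mod_cast congrArg (Nat.cast (R := ℤ)) (fib_step (4*m))
    have e2 : 4*(m+1)+4 = 4*m+8 := by ring
    have e1 : 4*(m+1) = 4*m+4 := by ring
    rw [e2, e1]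
    nlinarith [ih, hs]


def luc (k : ℕ) : ℕ := Nat.fib (k - 1) + Nat.fib (k + 1)

lemma luc_eq (k : ℕ) : luc (4*k+2) + Nat.fib (4*k) = Nat.fib (4*k+4) := by
  unfold luc
  rw [show 4*k+2+1 = 4*k+3 by omega, show 4*k+2-1 = 4*k+1 by omega]
  have h2 := fib_expand (4*k) 0
  have h3 := fib_expand (4*k) 1
  have h4 := fib_expand (4*k) 2
  norm_num at h2 h3 h4 ⊢
  omega

lemma fib_lt (k : ℕ) : Nat.fib (4*k) < Nat.fib (4*k+4) := by
  have h2 := fib_expand (4*k) 0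
  have h3 := fib_expand (4*k) 1
  have h4 := fib_expand (4*k) 2
  have h1 : 0 < Nat.fib (4*k+1) := Nat.fib_pos.2 (by omega)
  norm_num at h2 h3 h4 ⊢
  omega



/-- `F_k = f_{4k}/3`, as a real number. -/
noncomputable def FR (k : ℕ) : ℝ := (Nat.fib (4 * k) : ℝ) / 3

/-- `L_k = ℓ_{4k+2}/3`, as a real number. -/
noncomputable def LR (k : ℕ) : ℝ := (luc (4 * k + 2) : ℝ) / 3

/-- `u_k(j) = (F_{k+1} + jF_{k+2})/(F_k + jF_{k+1}) = [6;(1,5)^{k−1},1,6,j]`. -/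
noncomputable def uR (k j : ℕ) : ℝ := (FR (k + 1) + j * FR (k + 2)) / (FR k + j * FR (k + 1))

/-- `v_k(j) = (L_k + jF_{k+1})/(L_{k−1} + jF_k) = [6;(1,5)^{k−1},1,j]`. -/
noncomputable def vR (k j : ℕ) : ℝ := (LR k + j * FR (k + 1)) / (LR (k - 1) + j * FR k)

set_option maxHeartbeats 1000000 in
/-- **Lemma 4.9 (le:zigzag).** Fix `k ≥ 1`.  With `φ(a) = (a+1)/3` and
`ψ(a) = √a`:
(i) `φ(u_k(j+1)) > ψ(u_k(j))` for all `j ≥ 1`;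
(ii) `φ(v_k(j)) > ψ(v_k(j+1))` for all `j ≥ 7`. -/
theorem stmt_17 (k : ℕ) (hk : 1 ≤ k) :
    (∀ j : ℕ, 1 ≤ j → Real.sqrt (uR k j) < (uR k (j + 1) + 1) / 3) ∧
    (∀ j : ℕ, 7 ≤ j → Real.sqrt (vR k (j + 1)) < (vR k j + 1) / 3) := by
  constructor
  · -- part (i)
    intro j hj
    have hx : (0:ℝ) < Nat.fib (4*k) := by
      exact_mod_cast Nat.fib_pos.2 (by omega)
    have hu : ∀ n : ℕ, uR k n =
        ((Nat.fib (4*k+4) : ℝ) + n * (Nat.fib (4*k+8) : ℝ)) /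
        ((Nat.fib (4*k) : ℝ) + n * (Nat.fib (4*k+4) : ℝ)) := by
      intro n
      have hd : ((Nat.fib (4*k) : ℝ) + n * (Nat.fib (4*k+4) : ℝ)) ≠ 0 := by
        have : (0:ℝ) ≤ (n:ℝ) * (Nat.fib (4*k+4) : ℝ) := by positivity
        linarith
      unfold uR FR
      rw [show 4*(k+1) = 4*k+4 by ring, show 4*(k+2) = 4*k+8 by ring]
      rw [div_eq_div_iff (by
        intro h
        apply hd
        have := congrArg (· * (3:ℝ)) h
        simp at this
        nlinarith [this]) hd]
      ring
    rw [hu j, hu (j+1)]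
    push_cast
    set x := (Nat.fib (4*k) : ℝ) with hxe
    set y := (Nat.fib (4*k+4) : ℝ) with hye
    set z := (Nat.fib (4*k+8) : ℝ) with hze
    set J := (j : ℝ) with hJe
    clear_value x y z J
    have hJ1 : (1:ℝ) ≤ J := by rw [hJe]; exact_mod_cast hj
    have hyx : x < y := by rw [hxe, hye]; exact_mod_cast fib_lt k
    have hy0 : (0:ℝ) < y := lt_trans hx hyx
    have hzs : z + x = 7*y := by rw [hxe, hye, hze]; exact_mod_cast fib_step (4*k)
    have hq : y^2 + x^2 = 7*x*y + 9 := by rw [hxe, hye]; exact_mod_cast fib_qrel k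
    have hz0 : (0:ℝ) < z := by nlinarith
    have hzz : z = 7*y - x := by linarith
    have hrel0 : y^2 - 7*x*y + x^2 - 9 = 0 := by linarith
    have hDj : (0:ℝ) < x + J*y := by nlinarith
    have hD1 : (0:ℝ) < x + (J+1)*y := by nlinarith
    have hN1 : (0:ℝ) ≤ y + (J+1)*z := by nlinarith
    have hphi : (0:ℝ) < ((y + (J+1)*z) / (x + (J+1)*y) + 1) / 3 := by
      have h0 : (0:ℝ) ≤ (y + (J+1)*z) / (x + (J+1)*y) := div_nonneg hN1 hD1.le
      linarith
    rw [Real.sqrt_lt' hphi]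
    have heq : ((y + (J+1)*z) / (x + (J+1)*y) + 1) / 3
        = ((y + (J+1)*z) + (x + (J+1)*y)) / (3*(x + (J+1)*y)) := by
      rw [div_add' _ _ _ hD1.ne', div_div]
      ring_nf
    rw [heq, div_pow, div_lt_div_iff₀ hDj (pow_pos (by linarith : (0:ℝ) < 3*(x + (J+1)*y)) 2)]
    have hG : (0:ℝ) < x*J^2 + 9*x*J + y*J^3 + 9*y*J^2 - 9*y := by
      nlinarith [mul_pos hy0 (mul_pos (lt_of_lt_of_le one_pos hJ1) (lt_of_lt_of_le one_pos hJ1)), sq_nonneg (J-1)]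
    rw [hzz]
    have hid : (y+(J+1)*(7*y-x) + (x+(J+1)*y))^2 * (x+J*y)
        - (y+J*(7*y-x)) * (3*(x+(J+1)*y))^2
        = 9*(x*J^2 + 9*x*J + y*J^3 + 9*y*J^2 - 9*y)
          + (x*J^2 + 9*x*J + y*J^3 + 9*y*J^2 - 9*y) * (y^2 - 7*x*y + x^2 - 9) := by
      ring
    rw [hrel0, mul_zero, add_zero] at hid
    nlinarith [hid, hG]
  · -- part (ii)
    obtain ⟨m, rfl⟩ : ∃ m, k = m + 1 := ⟨k - 1, by omega⟩
    intro j hj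
    have hx : (0:ℝ) < Nat.fib (4*m+4) := by
      exact_mod_cast Nat.fib_pos.2 (by omega)
    have hyx : (Nat.fib (4*m+4) : ℝ) < (Nat.fib (4*m+8) : ℝ) := by
      have h := fib_lt (m+1)
      rw [show 4*(m+1)+4 = 4*m+8 by ring, show 4*(m+1) = 4*m+4 by ring] at h
      exact_mod_cast h
    have hq : (Nat.fib (4*m+8) : ℝ)^2 + (Nat.fib (4*m+4) : ℝ)^2
        = 7 * (Nat.fib (4*m+4) : ℝ) * (Nat.fib (4*m+8) : ℝ) + 9 := by
      have := fib_qrel (m+1)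
      rw [show 4*(m+1)+4 = 4*m+8 by ring, show 4*(m+1) = 4*m+4 by ring] at this
      exact_mod_cast this
    have hy6 : 6 * (Nat.fib (4*m+4) : ℝ) < (Nat.fib (4*m+8) : ℝ) := by
      nlinarith [hq, hyx, hx, sq_nonneg ((Nat.fib (4*m+8) : ℝ) - (Nat.fib (4*m+4) : ℝ))]
    have hq1 : (luc (4*m+6) : ℝ) = (Nat.fib (4*m+8) : ℝ) - (Nat.fib (4*m+4) : ℝ) := by
      have := luc_eq (m+1)
      rw [show 4*(m+1)+2 = 4*m+6 by ring, show 4*(m+1)+4 = 4*m+8 by ring,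
          show 4*(m+1) = 4*m+4 by ring] at this
      have := congrArg (Nat.cast (R := ℝ)) this
      push_cast at this
      linarith
    have hws : (Nat.fib (4*m+8) : ℝ) + (Nat.fib (4*m) : ℝ) = 7 * (Nat.fib (4*m+4) : ℝ) := by
      exact_mod_cast fib_step (4*m)
    have hp1 : (luc (4*m+2) : ℝ) = (Nat.fib (4*m+8) : ℝ) - 6 * (Nat.fib (4*m+4) : ℝ) := by
      have := luc_eq m
      have := congrArg (Nat.cast (R := ℝ)) this
      push_cast at this
      linarith
    have hv : ∀ n : ℕ, vR (m+1) n =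
        (((Nat.fib (4*m+8) : ℝ) - (Nat.fib (4*m+4) : ℝ)) + n * (Nat.fib (4*m+8) : ℝ)) /
        (((Nat.fib (4*m+8) : ℝ) - 6 * (Nat.fib (4*m+4) : ℝ)) + n * (Nat.fib (4*m+4) : ℝ)) := by
      intro n
      have hd : (((Nat.fib (4*m+8) : ℝ) - 6 * (Nat.fib (4*m+4) : ℝ)) + n * (Nat.fib (4*m+4) : ℝ)) ≠ 0 := by
        have : (0:ℝ) ≤ (n:ℝ) * (Nat.fib (4*m+4) : ℝ) := by positivity
        nlinarith
      unfold vR LR FR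
      rw [show m+1-1 = m from rfl, show 4*(m+1)+2 = 4*m+6 by ring,
          show 4*((m+1)+1) = 4*m+8 by ring, show 4*(m+1) = 4*m+4 by ring]
      rw [hq1, hp1]
      rw [div_eq_div_iff (by
        intro h
        apply hd
        nlinarith [congrArg (· * (3:ℝ)) h]) hd]
      ring
    rw [hv j, hv (j+1)]
    push_cast
    set x := (Nat.fib (4*m+4) : ℝ) with hxe
    set y := (Nat.fib (4*m+8) : ℝ) with hye
    set J := (j : ℝ) with hJe
    clear_value x y J
    have hJ7 : (7:ℝ) ≤ J := by rw [hJe]; exact_mod_cast hj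
    have hy0 : (0:ℝ) < y := lt_trans hx hyx
    have hrel0 : y^2 - 7*x*y + x^2 - 9 = 0 := by linarith
    have hD0 : (0:ℝ) < (y - 6*x) + J*x := by nlinarith
    have hD1 : (0:ℝ) < (y - 6*x) + (J+1)*x := by nlinarith
    have hN0 : (0:ℝ) ≤ (y - x) + J*y := by nlinarith
    have hphi : (0:ℝ) < (((y - x) + J*y) / ((y - 6*x) + J*x) + 1) / 3 := by
      have h0 : (0:ℝ) ≤ ((y - x) + J*y) / ((y - 6*x) + J*x) := div_nonneg hN0 hD0.le
      linarith
    rw [Real.sqrt_lt' hphi]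
    have heq : (((y - x) + J*y) / ((y - 6*x) + J*x) + 1) / 3
        = (((y - x) + J*y) + ((y - 6*x) + J*x)) / (3*((y - 6*x) + J*x)) := by
      rw [div_add' _ _ _ hD0.ne', div_div]
      ring_nf
    rw [heq, div_pow, div_lt_div_iff₀ hD1 (pow_pos (by linarith : (0:ℝ) < 3*((y - 6*x) + J*x)) 2)]
    have hG : (0:ℝ) < x*(J^3 - 10*J^2 + 11*J + 79) + y*(J^2 - 5*J - 14) := by
      have h7 : (0:ℝ) ≤ J - 7 := by linarith
      have h5 : (0:ℝ) ≤ J - 5 := by linarith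
      have h2 : (0:ℝ) ≤ J + 2 := by linarith
      nlinarith [mul_nonneg (mul_nonneg h7 h5) h2, mul_nonneg (mul_nonneg hy0.le h7) h2,
        mul_nonneg (mul_nonneg hx.le (mul_nonneg h7 h5)) h2]
    have hid : ((y - x) + J*y + ((y - 6*x) + J*x))^2 * ((y-6*x)+(J+1)*x)
        - ((y-x)+(J+1)*y) * (3*((y-6*x)+J*x))^2
        = 9*(x*(J^3 - 10*J^2 + 11*J + 79) + y*(J^2 - 5*J - 14))
          + (x*(J^3 - 10*J^2 + 11*J + 79) + y*(J^2 - 5*J - 14)) * (y^2 - 7*x*y + x^2 - 9) := by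
      ring
    rw [hrel0, mul_zero, add_zero] at hid
    nlinarith [hid, hG]
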